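/- Let x, y, s, t be integers such that x^2 + s^2 - s^4 = t^2 and y^2 + t^2 - t^4 = -s^2. Then (x,y,s,t) = (±1, 0, 0, ±1) or (0,0,0,0). -/
import Mathlib

lemma no_sq_between (y n : ℤ) (hn : 1 ≤ n) (hlt : (n-1)^2 < y^2)
    (hlt2 : y^2 < n^2) : False := by
  have hy1 : n - 1 < |y| := by nlinarith [abs_nonneg y, sq_abs y]
  have hy2 : |y| < n := by nlinarith [abs_nonneg y, sq_abs y]
  omega

set_option maxHeartbeats 1000000 in
theorem stmt_1 (x y s t : ℤ)
    (h1 : x^2 + s^2 - s^4 = t^2) (h2 : y^2 + t^2 - t^4 = -s^2) :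
    ((x = 1 ∨ x = -1) ∧ y = 0 ∧ s = 0 ∧ (t = 1 ∨ t = -1)) ∨
    (x = 0 ∧ y = 0 ∧ s = 0 ∧ t = 0) := by
  have hx : x^2 = t^2 + s^4 - s^2 := by linarith
  have hy : y^2 = t^4 - t^2 - s^2 := by linarith
  have hs2 : 0 ≤ s^2 := sq_nonneg s
  have ht2 : 0 ≤ t^2 := sq_nonneg t
  have hx2 : 0 ≤ x^2 := sq_nonneg x
  have hy2 : 0 ≤ y^2 := sq_nonneg y
  have hs : s = 0 := by
    by_contra hs0
    have ha1 : 1 ≤ s^2 := by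
      have : 0 < s^2 := by positivity
      linarith
    rcases lt_or_ge (s^2) (t^2) with hba | hab
    · -- t^2 > s^2 ≥ 1
      have hb1 : 1 ≤ t^2 := by linarith
      -- t^2 ≤ s^2 + 1
      have hble : t^2 ≤ s^2 + 1 := by
        by_contra hc
        push_neg at hc
        exact no_sq_between y (t^2) hb1 (by nlinarith) (by nlinarith)
      -- x^2 ≥ (s^2+1)^2, giving t^2 ≥ 3 s^2 + 1
      have hxge : (s^2 + 1)^2 ≤ x^2 := by
        by_contra hc
        push_neg at hc
        exact no_sq_between x (s^2 + 1) (by linarith) (by nlinarith) (by nlinarith)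
      nlinarith
    · -- t^2 ≤ s^2
      have hb1 : 1 ≤ t^2 := by
        rcases lt_or_ge 0 (t^2) with h | h
        · linarith
        · have ht0 : t^2 = 0 := le_antisymm h ht2
          nlinarith
      -- x^2 = s^4 : squeeze (s^2-1)^2 < x^2 ≤ (s^2)^2
      have hxeq : x^2 = (s^2)^2 := by
        rcases lt_or_ge (x^2) ((s^2)^2) with h | h
        · exact absurd (no_sq_between x (s^2) ha1 (by nlinarith) h) (by simp)
        · nlinarith
      have hbeq : t^2 = s^2 := by nlinarith
      -- y^2 = s^4 - 2 s^2
      have hyeq : y^2 = s^4 - 2 * s^2 := by nlinarith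
      rcases lt_or_ge 1 (s^2) with ha2 | ha2
      · -- s^2 ≥ 2 : squeeze y^2 ≤ (s^2-2)^2, get s^2 ≤ 2, so s^2 = 2, impossible
        have hyle : y^2 ≤ (s^2 - 2)^2 := by
          by_contra hc
          push_neg at hc
          exact no_sq_between y (s^2 - 1) (by linarith) (by nlinarith) (by nlinarith)
        have : s^2 = 2 := by nlinarith
        obtain ⟨hl, hr⟩ : -2 ≤ s ∧ s ≤ 2 := by constructor <;> nlinarith
        interval_cases s <;> omega
      · -- s^2 = 1 : y^2 = -1
        have heq1 : s^2 = 1 := le_antisymm ha2 ha1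
        have h4 : s^4 = 1 := by
          have h5 : s^4 = s^2 * s^2 := by ring
          rw [h5, heq1]; ring
        linarith
  subst hs
  have hx' : x^2 = t^2 := by linarith
  have hy' : y^2 = t^4 - t^2 := by linarith
  have htle : t^2 ≤ 1 := by
    by_contra hc
    push_neg at hc
    exact no_sq_between y (t^2) (by linarith) (by nlinarith) (by nlinarith)
  have htb : -1 ≤ t ∧ t ≤ 1 := by constructor <;> nlinarith
  obtain ⟨htl, htr⟩ := htb
  interval_cases t
  · -- t = -1
    left
    have hx1 : x^2 = 1 := by linarith
    have hy0 : y = 0 := by nlinarith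
    refine ⟨?_, hy0, rfl, Or.inr rfl⟩
    have : (x - 1) * (x + 1) = 0 := by nlinarith
    rcases mul_eq_zero.mp this with h | h <;> omega
  · right
    have hx0 : x = 0 := by nlinarith
    have hy0 : y = 0 := by nlinarith
    exact ⟨hx0, hy0, rfl, rfl⟩
  · left
    have hx1 : x^2 = 1 := by linarith
    have hy0 : y = 0 := by nlinarith
    refine ⟨?_, hy0, rfl, Or.inl rfl⟩
    have : (x - 1) * (x + 1) = 0 := by nlinarith
    rcases mul_eq_zero.mp this with h | h <;> omega
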